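/- Let a < b be positive integers with gcd(a,b) = 1, b ≥ a + 2. Consider the affine semigroup S = ⟨(0, 2a+b), (a, a+b), (b, 2a), (a+b, a), (2a+b, 0)⟩ ⊆ ℕ². Then the vector v = (a(b-1), b² - 2b + ab - 3a) satisfies: v + (0, 2a+b) ∈ S, v + (2a+b, 0) ∈ S, but v ∉ S. -/

import Mathlib

/-- For coprime `0 < a < b` with `b ≥ a + 2`, the vector
`v = (a(b-1), b² - 2b + ab - 3a)` satisfies `v + (0, 2a+b) ∈ S` and
`v + (2a+b, 0) ∈ S` but `v ∉ S`, where `S` is the affine semigroup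
generated by `(0,2a+b), (a,a+b), (b,2a), (a+b,a), (2a+b,0)`. -/
theorem stmt_8 (a b : ℤ) (ha : 0 < a) (hab : a < b) (hcop : IsCoprime a b)
    (hb : a + 2 ≤ b) :
    let S := AddSubmonoid.closure
      ({(0, 2 * a + b), (a, a + b), (b, 2 * a), (a + b, a), (2 * a + b, 0)} : Set (ℤ × ℤ))
    let v : ℤ × ℤ := (a * (b - 1), b ^ 2 - 2 * b + a * b - 3 * a)
    v + (0, 2 * a + b) ∈ S ∧ v + (2 * a + b, 0) ∈ S ∧ v ∉ S := by
  intro S v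
  have hg1 : ((0, 2*a+b) : ℤ×ℤ) ∈ S := AddSubmonoid.subset_closure (by simp)
  have hg2 : ((a, a+b) : ℤ×ℤ) ∈ S := AddSubmonoid.subset_closure (by simp)
  have hg3 : ((b, 2*a) : ℤ×ℤ) ∈ S := AddSubmonoid.subset_closure (by simp)
  have hg4 : ((a+b, a) : ℤ×ℤ) ∈ S := AddSubmonoid.subset_closure (by simp)
  refine ⟨?_, ?_, ?_⟩
  · have h : v + (0, 2 * a + b) = (b-1).toNat • ((a, a+b) : ℤ×ℤ) := by
      have ht : ((b-1).toNat : ℤ) = b - 1 := Int.toNat_of_nonneg (by linarith)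
      show (a * (b - 1) + 0, (b ^ 2 - 2 * b + a * b - 3 * a) + (2*a+b)) = _
      rw [Prod.smul_def]
      simp only [nsmul_eq_mul, ht, Prod.mk.injEq]
      constructor <;> ring
    rw [h]
    exact nsmul_mem hg2 _
  · have h : v + (2 * a + b, 0) =
        (b-a-2).toNat • ((0, 2*a+b) : ℤ×ℤ) + a.toNat • ((b, 2*a) : ℤ×ℤ) + ((a+b, a) : ℤ×ℤ) := by
      have ht : ((b-a-2).toNat : ℤ) = b - a - 2 := Int.toNat_of_nonneg (by linarith)
      have ha' : (a.toNat : ℤ) = a := Int.toNat_of_nonneg ha.le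
      show (a * (b - 1) + (2*a+b), (b ^ 2 - 2 * b + a * b - 3 * a) + 0) = _
      rw [Prod.smul_def, Prod.smul_def]
      simp only [nsmul_eq_mul, ht, ha', Prod.mk_add_mk, Prod.mk.injEq]
      constructor <;> ring
    rw [h]
    exact AddSubmonoid.add_mem _ (AddSubmonoid.add_mem _ (nsmul_mem hg1 _)
      (nsmul_mem hg3 _)) hg4
  · intro hv
    have hrep : ∃ c1 c2 c3 c4 c5 : ℕ,
        v = ((c2:ℤ)*a + c3*b + c4*(a+b) + c5*(2*a+b),
             (c1:ℤ)*(2*a+b) + c2*(a+b) + c3*(2*a) + c4*a) := by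
      clear_value v
      induction hv using AddSubmonoid.closure_induction with
      | mem x hx =>
        rcases hx with h|h|h|h|h
        · exact ⟨1,0,0,0,0, by subst h; ext <;> push_cast <;> ring⟩
        · exact ⟨0,1,0,0,0, by subst h; ext <;> push_cast <;> ring⟩
        · exact ⟨0,0,1,0,0, by subst h; ext <;> push_cast <;> ring⟩
        · exact ⟨0,0,0,1,0, by subst h; ext <;> push_cast <;> ring⟩
        · exact ⟨0,0,0,0,1, by rw [h]; ext <;> push_cast <;> ring⟩
      | zero =>
        exact ⟨0,0,0,0,0, by ext <;> simp⟩
      | add x y hx hy ihx ihy =>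
        obtain ⟨c1,c2,c3,c4,c5,hx'⟩ := ihx
        obtain ⟨d1,d2,d3,d4,d5,hy'⟩ := ihy
        exact ⟨c1+d1, c2+d2, c3+d3, c4+d4, c5+d5, by
          rw [hx', hy']
          simp only [Prod.mk_add_mk, Prod.mk.injEq]
          constructor <;> push_cast <;> ring⟩
    obtain ⟨c1, c2, c3, c4, c5, hrep⟩ := hrep
    have e1 : (c2:ℤ)*a + c3*b + c4*(a+b) + c5*(2*a+b) = a * (b-1) :=
      (congrArg Prod.fst hrep).symm
    have e2 : (c1:ℤ)*(2*a+b) + c2*(a+b) + c3*(2*a) + c4*a = b ^ 2 - 2 * b + a * b - 3 * a :=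
      (congrArg Prod.snd hrep).symm
    have hsum : ((c1:ℤ)+c2+c3+c4+c5) = b - 2 := by
      have h2ab : (2*a+b) ≠ 0 := ne_of_gt (by linarith)
      have : ((c1:ℤ)+c2+c3+c4+c5) * (2*a+b) = (b-2) * (2*a+b) := by linarith [e1, e2]
      exact mul_right_cancel₀ h2ab this
    have hdvd : a ∣ ((c3:ℤ)+c4+c5) := by
      have : a ∣ ((c3:ℤ)+c4+c5) * b :=
        ⟨b - 1 - (c2 + c4 + 2*c5), by linear_combination e1⟩
      exact hcop.dvd_of_dvd_mul_right this
    obtain ⟨k, hk⟩ := hdvd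
    have hc1 : (0:ℤ) ≤ c1 := Int.natCast_nonneg _
    have hc2 : (0:ℤ) ≤ c2 := Int.natCast_nonneg _
    have hc3 : (0:ℤ) ≤ c3 := Int.natCast_nonneg _
    have hc4 : (0:ℤ) ≤ c4 := Int.natCast_nonneg _
    have hc5 : (0:ℤ) ≤ c5 := Int.natCast_nonneg _
    have hk0 : 0 ≤ k := by nlinarith
    rcases eq_or_lt_of_le hk0 with h0 | h1
    · have hk' : (c3:ℤ) + c4 + c5 = 0 := by rw [← h0, mul_zero] at hk; exact hk
      have h3 : (c3:ℤ) = 0 := by linarith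
      have h4 : (c4:ℤ) = 0 := by linarith
      have h5 : (c5:ℤ) = 0 := by linarith
      have hc2' : (c2:ℤ) = b - 1 := by
        have h : a * (c2:ℤ) = a * (b-1) := by
          linear_combination e1 - b*h3 - (a+b)*h4 - (2*a+b)*h5
        exact mul_left_cancel₀ (ne_of_gt ha) h
      linarith
    · have hk1 : 1 ≤ k := h1
      nlinarith [mul_le_mul_of_nonneg_left hk1 (mul_nonneg (by linarith : (0:ℤ) ≤ b) ha.le),
        mul_nonneg ha.le hc2, mul_nonneg ha.le hc4, mul_nonneg ha.le hc5]
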